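/- Let A = C*C and B = D*D with C, D invertible n×n complex matrices, and let U = polar(C D^{-1}) be the unitary polar factor of C D^{-1}. Then A # B = C* U D. -/

import Mathlib

open Matrix ComplexOrder

/-- The positive semidefinite square root of a positive semidefinite matrix
(as defined in Mathlib of December 2024, since removed). -/
noncomputable def Matrix.PosSemidef.sqrt {n 𝕜 : Type*} [Fintype n] [DecidableEq n] [RCLike 𝕜]
    {A : Matrix n n 𝕜} (hA : A.PosSemidef) : Matrix n n 𝕜 :=
  hA.1.eigenvectorUnitary.1 * diagonal ((↑) ∘ (Real.sqrt ·) ∘ hA.1.eigenvalues) *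
    (star hA.1.eigenvectorUnitary : Matrix n n 𝕜)

lemma Matrix.PosSemidef.sqrt_isHermitian {n 𝕜 : Type*} [Fintype n] [DecidableEq n] [RCLike 𝕜]
    {A : Matrix n n 𝕜} (hA : A.PosSemidef) : hA.sqrt.IsHermitian := by
  unfold Matrix.PosSemidef.sqrt
  rw [IsHermitian, conjTranspose_mul, conjTranspose_mul, diagonal_conjTranspose]
  simp only [Matrix.star_eq_conjTranspose, conjTranspose_conjTranspose, mul_assoc]
  congr 3
  funext i
  simp

open scoped MatrixOrder in
lemma Matrix.PosSemidef.sqrt_eq_cfc {n 𝕜 : Type*} [Fintype n] [DecidableEq n] [RCLike 𝕜]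
    {A : Matrix n n 𝕜} (hA : A.PosSemidef) : hA.sqrt = CFC.sqrt A := by
  rw [CFC.sqrt_eq_real_sqrt A hA.nonneg, cfcₙ_eq_cfc (hf0 := Real.sqrt_zero), hA.1.cfc_eq]
  rfl

open scoped MatrixOrder in
lemma Matrix.PosSemidef.sqrt_mul_self {n 𝕜 : Type*} [Fintype n] [DecidableEq n] [RCLike 𝕜]
    {A : Matrix n n 𝕜} (hA : A.PosSemidef) : hA.sqrt * hA.sqrt = A := by
  rw [hA.sqrt_eq_cfc]
  exact CFC.sqrt_mul_sqrt_self A hA.nonneg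

open scoped MatrixOrder in
lemma Matrix.PosSemidef.posSemidef_sqrt {n 𝕜 : Type*} [Fintype n] [DecidableEq n] [RCLike 𝕜]
    {A : Matrix n n 𝕜} (hA : A.PosSemidef) : hA.sqrt.PosSemidef := by
  rw [hA.sqrt_eq_cfc]
  exact (CFC.sqrt_nonneg A).posSemidef

open scoped MatrixOrder in
lemma Matrix.PosSemidef.eq_sqrt_of_sq_eq {n 𝕜 : Type*} [Fintype n] [DecidableEq n] [RCLike 𝕜]
    {A B : Matrix n n 𝕜} (hA : A.PosSemidef) (hB : B.PosSemidef) (hAB : A ^ 2 = B) :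
    A = hB.sqrt := by
  rw [hB.sqrt_eq_cfc, ← hAB]
  exact (CFC.sqrt_sq A hA.nonneg).symm

lemma geomMean_aux {n : ℕ} {A B : Matrix (Fin n) (Fin n) ℂ} (hA : A.PosDef) (hB : B.PosDef) :
    ((hA.posSemidef.sqrt)⁻¹ * B * (hA.posSemidef.sqrt)⁻¹).PosSemidef := by
  have h := hB.posSemidef.conjTranspose_mul_mul_same (hA.posSemidef.sqrt)⁻¹
  rwa [(hA.posSemidef.sqrt_isHermitian.inv).eq] at h

/-- The geometric mean `A # B = A^{1/2} (A^{-1/2} B A^{-1/2})^{1/2} A^{1/2}` of two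
Hermitian positive definite matrices. -/
noncomputable def geomMean {n : ℕ} {A B : Matrix (Fin n) (Fin n) ℂ}
    (hA : A.PosDef) (hB : B.PosDef) : Matrix (Fin n) (Fin n) ℂ :=
  hA.posSemidef.sqrt * (geomMean_aux hA hB).sqrt * hA.posSemidef.sqrt

/-- If `A = Cᴴ C`, `B = Dᴴ D` with `C, D` invertible, then `A # B = Cᴴ * polar(C D⁻¹) * D`,
where `polar(M) = M * (Mᴴ M)^{-1/2}` is the unitary polar factor. -/
theorem geomMean_eq_conj_polar {n : ℕ} {A B C D : Matrix (Fin n) (Fin n) ℂ}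
    (hA : A.PosDef) (hB : B.PosDef)
    (hC : IsUnit C.det) (hD : IsUnit D.det)
    (hAC : A = Cᴴ * C) (hBD : B = Dᴴ * D)
    (hM : ((C * D⁻¹)ᴴ * (C * D⁻¹)).PosDef) :
    geomMean hA hB = Cᴴ * (C * D⁻¹ * (hM.posSemidef.sqrt)⁻¹) * D := by
  set S := hA.posSemidef.sqrt with hSdef
  set N := hM.posSemidef.sqrt with hNdef
  have hS2 : S * S = A := hA.posSemidef.sqrt_mul_self
  have hN2 : N * N = (C * D⁻¹)ᴴ * (C * D⁻¹) := hM.posSemidef.sqrt_mul_self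
  have hAdet : IsUnit A.det := isUnit_iff_ne_zero.mpr hA.det_pos.ne'
  have hSdet : IsUnit S.det := by
    have h : S.det * S.det = A.det := by rw [← det_mul, hS2]
    exact isUnit_of_mul_isUnit_left (h ▸ hAdet)
  have hNdet : IsUnit N.det := by
    have h : N.det * N.det = ((C * D⁻¹)ᴴ * (C * D⁻¹)).det := by rw [← det_mul, hN2]
    exact isUnit_of_mul_isUnit_left (h ▸ isUnit_iff_ne_zero.mpr hM.det_pos.ne')
  have hSH : Sᴴ = S := hA.posSemidef.posSemidef_sqrt.isHermitian.eq
  have hNH : Nᴴ = N := hM.posSemidef.posSemidef_sqrt.isHermitian.eq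
  have hDHdet : IsUnit Dᴴ.det := by
    rw [det_conjTranspose]; exact hD.star
  have hMkey : N * N = (D⁻¹)ᴴ * A * D⁻¹ := by
    rw [hN2, conjTranspose_mul, hAC]
    simp [Matrix.mul_assoc]
  set K := S * D⁻¹ with hKdef
  have hKH : Kᴴ = (D⁻¹)ᴴ * S := by rw [hKdef, conjTranspose_mul, hSH]
  have hKK : Kᴴ * K = N * N := by
    rw [hKH, hMkey, hKdef, ← hS2]
    simp [Matrix.mul_assoc]
  have hDS : D * S⁻¹ = N⁻¹ * N⁻¹ * Kᴴ := by
    have h1 : (D * S⁻¹) * K = 1 := by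
      rw [hKdef, Matrix.mul_assoc, ← Matrix.mul_assoc S⁻¹,
        Matrix.nonsing_inv_mul S hSdet, Matrix.one_mul, Matrix.mul_nonsing_inv D hD]
    have h2 : (N⁻¹ * N⁻¹ * Kᴴ) * K = 1 := by
      rw [Matrix.mul_assoc, hKK]
      simp only [Matrix.mul_assoc]
      rw [← Matrix.mul_assoc N⁻¹ N N, Matrix.nonsing_inv_mul N hNdet,
        Matrix.one_mul, Matrix.nonsing_inv_mul N hNdet]
    rw [← Matrix.inv_eq_left_inv h1, ← Matrix.inv_eq_left_inv h2]
  have hYK : S * D⁻¹ * N⁻¹ * (D * S⁻¹) = K * (N⁻¹ * N⁻¹ * N⁻¹) * Kᴴ := by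
    rw [hDS, hKdef]
    simp [Matrix.mul_assoc]
  have hYpsd : (S * D⁻¹ * N⁻¹ * (D * S⁻¹)).PosSemidef := by
    rw [hYK]
    have h3 : (N⁻¹ * N⁻¹ * N⁻¹).PosSemidef := by
      have h := (hM.posSemidef.posSemidef_sqrt.inv).conjTranspose_mul_mul_same N⁻¹
      rwa [Matrix.conjTranspose_nonsing_inv, hNH] at h
    exact h3.mul_mul_conjTranspose_same K
  have hNNinv : (N * N)⁻¹ = D * A⁻¹ * Dᴴ := by
    rw [hMkey, Matrix.mul_inv_rev, Matrix.mul_inv_rev,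
      Matrix.nonsing_inv_nonsing_inv D hD, Matrix.conjTranspose_nonsing_inv,
      Matrix.nonsing_inv_nonsing_inv Dᴴ hDHdet]
    simp [Matrix.mul_assoc]
  have hSAinv : S * A⁻¹ = S⁻¹ := by
    rw [← hS2, Matrix.mul_inv_rev, ← Matrix.mul_assoc,
      Matrix.mul_nonsing_inv S hSdet, Matrix.one_mul]
  have hYsq : (S * D⁻¹ * N⁻¹ * (D * S⁻¹)) ^ 2 = S⁻¹ * B * S⁻¹ := by
    have : (S * D⁻¹ * N⁻¹ * (D * S⁻¹)) ^ 2
        = S * D⁻¹ * ((N * N)⁻¹ * (D * S⁻¹)) := by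
      rw [pow_two, Matrix.mul_inv_rev]
      calc S * D⁻¹ * N⁻¹ * (D * S⁻¹) * (S * D⁻¹ * N⁻¹ * (D * S⁻¹))
          = S * D⁻¹ * N⁻¹ * ((D * (S⁻¹ * S)) * D⁻¹ * N⁻¹ * (D * S⁻¹)) := by
            simp [Matrix.mul_assoc]
        _ = S * D⁻¹ * (N⁻¹ * N⁻¹ * (D * S⁻¹)) := by
            rw [Matrix.nonsing_inv_mul S hSdet, Matrix.mul_one,
              Matrix.mul_nonsing_inv D hD]
            simp [Matrix.mul_assoc]
    rw [this, hNNinv, hBD]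
    calc S * D⁻¹ * (D * A⁻¹ * Dᴴ * (D * S⁻¹))
        = S * ((D⁻¹ * D) * A⁻¹ * (Dᴴ * D) * S⁻¹) := by simp [Matrix.mul_assoc]
      _ = S * A⁻¹ * (Dᴴ * D) * S⁻¹ := by
          rw [Matrix.nonsing_inv_mul D hD, Matrix.one_mul]
          simp [Matrix.mul_assoc]
      _ = S⁻¹ * (Dᴴ * D) * S⁻¹ := by rw [hSAinv]
  have hsqrt : S * D⁻¹ * N⁻¹ * (D * S⁻¹) = (geomMean_aux hA hB).sqrt :=
    hYpsd.eq_sqrt_of_sq_eq (geomMean_aux hA hB) hYsq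
  rw [geomMean, ← hsqrt]
  calc S * (S * D⁻¹ * N⁻¹ * (D * S⁻¹)) * S
      = (S * S) * D⁻¹ * N⁻¹ * (D * (S⁻¹ * S)) := by simp [Matrix.mul_assoc]
    _ = Cᴴ * (C * D⁻¹ * N⁻¹) * D := by
        rw [Matrix.nonsing_inv_mul S hSdet, Matrix.mul_one, hS2, hAC]
        simp [Matrix.mul_assoc]
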